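/- The functions ρ_0, …, ρ_K defined by the explicit recursion form a probability mass function at every time: Σ_{k=0}^K ρ_k(t) = 1 for all t ≥ 0. -/

import Mathlib

open MeasureTheory

open intervalIntegral in
private lemma primitive_hasDerivAt {f : ℝ → ℝ} (hf : Continuous f) (t : ℝ) :
    HasDerivAt (fun u => ∫ s in (0:ℝ)..u, f s) (f t) t :=
  (hf.integral_hasStrictDerivAt 0 t).hasDerivAt

/-- The recursively defined probabilities `ρ_k` from the Fokker–Planck solution formula:
`ρ_0(t) = exp(-∫_0^t g_0)`, `ρ_{k+1}(t) = ∫_0^t ρ_k(s) g_k(s) exp(-∫_s^t g_{k+1}) ds`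
for `k+1 < K`, and `ρ_K(t) = ∫_0^t ρ_{K-1}(s) g_{K-1}(s) ds`. -/
noncomputable def rho (K : ℕ) (g : ℕ → ℝ → ℝ) : ℕ → ℝ → ℝ
  | 0 => fun t => Real.exp (-(∫ s in (0:ℝ)..t, g 0 s))
  | (k+1) => fun t =>
      if k + 1 = K then ∫ s in (0:ℝ)..t, rho K g k s * g k s
      else ∫ s in (0:ℝ)..t, rho K g k s * g k s * Real.exp (-(∫ u in s..t, g (k+1) u))

private lemma rho_succ_eq (K : ℕ) (q : ℕ → ℝ → ℝ) (k : ℕ) (hk : k + 1 ≠ K)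
    (hc : Continuous (q (k+1))) (t : ℝ) :
    rho K q (k+1) t = Real.exp (-(∫ s in (0:ℝ)..t, q (k+1) s)) *
      ∫ s in (0:ℝ)..t, rho K q k s * q k s * Real.exp (∫ u in (0:ℝ)..s, q (k+1) u) := by
  rw [show rho K q (k+1) t = ∫ s in (0:ℝ)..t,
      rho K q k s * q k s * Real.exp (-(∫ u in s..t, q (k+1) u)) from by
    simp [rho, hk]]
  rw [← intervalIntegral.integral_const_mul]
  apply intervalIntegral.integral_congr
  intro s _
  dsimp only
  have h : (∫ u in s..t, q (k+1) u) =
      (∫ u in (0:ℝ)..t, q (k+1) u) - ∫ u in (0:ℝ)..s, q (k+1) u :=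
    (intervalIntegral.integral_interval_sub_left (hc.intervalIntegrable _ _)
      (hc.intervalIntegrable _ _)).symm
  rw [h, neg_sub, Real.exp_sub]
  ring_nf
  rw [Real.exp_neg]

noncomputable def dRho (K : ℕ) (q : ℕ → ℝ → ℝ) (k : ℕ) (t : ℝ) : ℝ :=
  (if k = 0 then 0 else rho K q (k-1) t * q (k-1) t) -
    (if k = K then 0 else q k t * rho K q k t)

private lemma rho_deriv (K : ℕ) (hK : 1 ≤ K) (q : ℕ → ℝ → ℝ)
    (hq : ∀ k, k < K → Continuous (q k)) :
    ∀ k, k ≤ K → (Continuous (rho K q k) ∧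
      ∀ t, HasDerivAt (rho K q k) (dRho K q k t) t) := by
  intro k
  induction k with
  | zero =>
    intro _
    have h0 : (0:ℕ) < K := hK
    have hd : ∀ t, HasDerivAt (rho K q 0) (dRho K q 0 t) t := by
      intro t
      have : HasDerivAt (fun u => Real.exp (-(∫ s in (0:ℝ)..u, q 0 s)))
          (Real.exp (-(∫ s in (0:ℝ)..t, q 0 s)) * (-(q 0 t))) t :=
        ((primitive_hasDerivAt (hq 0 h0) t).neg).exp
      have heq : rho K q 0 = fun u => Real.exp (-(∫ s in (0:ℝ)..u, q 0 s)) := rfl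
      rw [show dRho K q 0 t = 0 - q 0 t * rho K q 0 t from by
        unfold dRho
        rw [if_pos rfl, if_neg (Ne.symm (Nat.one_le_iff_ne_zero.mp hK))]]
      rw [heq]
      convert this using 1
      show (0:ℝ) - q 0 t * Real.exp (-(∫ s in (0:ℝ)..t, q 0 s)) = _
      ring
    exact ⟨continuous_iff_continuousAt.2 fun t => (hd t).continuousAt, hd⟩
  | succ k ih =>
    intro hk1
    obtain ⟨hc, _⟩ := ih (le_of_lt (Nat.lt_of_succ_le hk1))
    have hkK : k < K := Nat.lt_of_succ_le hk1
    have hgk : Continuous (fun s => rho K q k s * q k s) := hc.mul (hq k hkK)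
    rcases eq_or_ne (k+1) K with hEq | hNe
    · have heq : rho K q (k+1) = fun t => ∫ s in (0:ℝ)..t, rho K q k s * q k s := by
        funext t; simp [rho, hEq]
      have hd : ∀ t, HasDerivAt (rho K q (k+1)) (dRho K q (k+1) t) t := by
        intro t
        rw [show dRho K q (k+1) t = rho K q k t * q k t from by
          unfold dRho
          rw [if_pos hEq, if_neg (Nat.succ_ne_zero k), Nat.add_sub_cancel, sub_zero]]
        rw [heq]
        exact primitive_hasDerivAt hgk t
      exact ⟨continuous_iff_continuousAt.2 fun t => (hd t).continuousAt, hd⟩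
    · have hk1K : k + 1 < K := lt_of_le_of_ne hk1 hNe
      have hcq : Continuous (q (k+1)) := hq (k+1) hk1K
      have hP : ∀ t, HasDerivAt (fun u => ∫ s in (0:ℝ)..u, q (k+1) s) (q (k+1) t) t :=
        primitive_hasDerivAt hcq
      have hPc : Continuous (fun u => ∫ s in (0:ℝ)..u, q (k+1) s) :=
        continuous_iff_continuousAt.2 fun t => (hP t).continuousAt
      have hh : Continuous (fun s => rho K q k s * q k s *
          Real.exp (∫ u in (0:ℝ)..s, q (k+1) u)) :=
        hgk.mul (Real.continuous_exp.comp hPc)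
      have heq : rho K q (k+1) = fun t => Real.exp (-(∫ s in (0:ℝ)..t, q (k+1) s)) *
          ∫ s in (0:ℝ)..t, rho K q k s * q k s * Real.exp (∫ u in (0:ℝ)..s, q (k+1) u) :=
        funext (rho_succ_eq K q k hNe hcq)
      have hd : ∀ t, HasDerivAt (rho K q (k+1)) (dRho K q (k+1) t) t := by
        intro t
        have h1 : HasDerivAt (fun u => Real.exp (-(∫ s in (0:ℝ)..u, q (k+1) s)))
            (Real.exp (-(∫ s in (0:ℝ)..t, q (k+1) s)) * (-(q (k+1) t))) t :=
          ((hP t).neg).exp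
        have h2 := primitive_hasDerivAt hh t
        have hmul := h1.mul h2
        rw [show dRho K q (k+1) t = rho K q k t * q k t - q (k+1) t * rho K q (k+1) t from by
          simp [dRho, hNe]]
        rw [heq]
        refine hmul.congr_deriv ?_
        symm
        simp only [Real.exp_neg]
        field_simp
        ring
      exact ⟨continuous_iff_continuousAt.2 fun t => (hd t).continuousAt, hd⟩

/-- The recursively defined `ρ_0, …, ρ_K` form a probability mass function at every time:
`Σ_{k=0}^K ρ_k(t) = 1` for all `t ≥ 0`. -/
theorem rho_sum_eq_one (K : ℕ) (hK : 1 ≤ K) (q : ℕ → ℝ → ℝ)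
    (hq : ∀ k, k < K → Continuous (q k)) :
    ∀ t : ℝ, 0 ≤ t → ∑ k ∈ Finset.range (K + 1), rho K q k t = 1 := by
  intro t _
  have hd : ∀ u : ℝ, HasDerivAt (fun u => ∑ k ∈ Finset.range (K + 1), rho K q k u)
      (∑ k ∈ Finset.range (K + 1), dRho K q k u) u := fun u =>
    HasDerivAt.fun_sum fun k hk =>
      (rho_deriv K hK q hq k (Nat.lt_succ_iff.mp (Finset.mem_range.mp hk))).2 u
  have hzero : ∀ u : ℝ, (∑ k ∈ Finset.range (K + 1), dRho K q k u) = 0 := by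
    intro u
    unfold dRho
    rw [Finset.sum_sub_distrib, sub_eq_zero,
      Finset.sum_range_succ' (fun k => if k = 0 then (0:ℝ) else rho K q (k-1) u * q (k-1) u) K,
      Finset.sum_range_succ (fun k => if k = K then (0:ℝ) else q k u * rho K q k u) K]
    simp only [if_pos rfl, if_true, if_false, add_zero, Nat.add_sub_cancel,
      Nat.succ_ne_zero, ite_false]
    apply Finset.sum_congr rfl
    intro k hk
    rw [if_neg (Finset.mem_range.mp hk).ne]
    ring
  have hconst : (fun u => ∑ k ∈ Finset.range (K + 1), rho K q k u) t
      = (fun u => ∑ k ∈ Finset.range (K + 1), rho K q k u) 0 :=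
    is_const_of_deriv_eq_zero (fun u => (hd u).differentiableAt)
      (fun u => by rw [(hd u).deriv, hzero]) t 0
  have h1 : ∀ k, rho K q (k+1) (0:ℝ) = 0 := by
    intro k
    show (if k + 1 = K then _ else _) = (0:ℝ)
    split <;> simp
  have h0 : rho K q 0 (0:ℝ) = 1 := by
    show Real.exp (-(∫ s in (0:ℝ)..(0:ℝ), q 0 s)) = 1
    simp
  calc ∑ k ∈ Finset.range (K + 1), rho K q k t
      = ∑ k ∈ Finset.range (K + 1), rho K q k 0 := hconst
    _ = 1 := by
        rw [Finset.sum_range_succ' (fun k => rho K q k (0:ℝ)) K]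
        simp [h1, h0]
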